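/- (Extended pose error propagation.) Fix Δt ∈ ℝ and let F : ℝ⁹ → ℝ⁹ be the linear map (ω, v, x) ↦ (ω, v, x + Δt·v). Let T̄ ∈ SE₂(3), ξ ∈ ℝ⁹, Υ ∈ SE₂(3), let Γ be any invertible 5×5 real matrix, and let Φ = Φ_Δt. Then Γ Φ(T̄ exp_m(ξ^∧)) Υ = (Γ Φ(T̄) Υ) exp_m((Ad_{Υ⁻¹} F ξ)^∧); i.e., if T̄_{k+1} := Γ Φ(T̄) Υ denotes the noise-free propagation of T̄, the exponential error coordinates propagate linearly as ξ ↦ Ad_{Υ⁻¹} F ξ. -/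

import Mathlib

open Matrix

noncomputable section

abbrev M3 := Matrix (Fin 3) (Fin 3) ℝ
abbrev M5 := Matrix (Fin 5) (Fin 5) ℝ
abbrev V3 := Fin 3 → ℝ
abbrev V9 := V3 × V3 × V3

/-- Skew-symmetric cross-product matrix `(ω)ₓ`. -/
def skew (ω : V3) : M3 := !![0, -ω 2, ω 1; ω 2, 0, -ω 0; -ω 1, ω 0, 0]

/-- 5×5 block matrix `[[A, v, x],[0₁ₓ₃, d, 0],[0₁ₓ₃, 0, e]]`. -/
def blk (A : M3) (v x : V3) (d e : ℝ) : M5 :=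
  !![A 0 0, A 0 1, A 0 2, v 0, x 0;
     A 1 0, A 1 1, A 1 2, v 1, x 1;
     A 2 0, A 2 1, A 2 2, v 2, x 2;
     0, 0, 0, d, 0;
     0, 0, 0, 0, e]

/-- Element of `SE₂(3)` built from rotation `R`, velocity `V`, position `X`. -/
def se23 (R : M3) (V X : V3) : M5 := blk R V X 1 1

/-- The hat map `ξ^∧` of `ξ = (ω, v, x) ∈ ℝ⁹`. -/
def hat (ω v x : V3) : M5 := blk (skew ω) v x 0 0

def hat9 (ξ : V9) : M5 := hat ξ.1 ξ.2.1 ξ.2.2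

def IsSO3 (R : M3) : Prop := Rᵀ * R = 1 ∧ R.det = 1

def IsSE23 (T : M5) : Prop := ∃ R V X, IsSO3 R ∧ T = se23 R V X

/-- Rotation block of a 5×5 matrix. -/
def Rof (T : M5) : M3 := Matrix.of fun i j => T (Fin.castLE (by omega) i) (Fin.castLE (by omega) j)

/-- Velocity column of a 5×5 matrix. -/
def Vof (T : M5) : V3 := fun i => T (Fin.castLE (by omega) i) 3

/-- Position column of a 5×5 matrix. -/
def Xof (T : M5) : V3 := fun i => T (Fin.castLE (by omega) i) 4

/-- Adjoint of `T ∈ SE₂(3)` acting on `ξ = (ω, v, x) ∈ ℝ⁹`: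
  `[[R, 0, 0],[(V)ₓR, R, 0],[(X)ₓR, 0, R]]`. -/
def Ad (T : M5) (ξ : V9) : V9 :=
  (Rof T *ᵥ ξ.1,
   (skew (Vof T) * Rof T) *ᵥ ξ.1 + Rof T *ᵥ ξ.2.1,
   (skew (Xof T) * Rof T) *ᵥ ξ.1 + Rof T *ᵥ ξ.2.2)

/-- `f(T)` : places the velocity column of `T` in the position column. -/
def fmap (T : M5) : M5 := blk 0 0 (Vof T) 0 0

/-- `Φ_t` : maps `[[R,V,X],...]` to `[[R,V,X+tV],...]` (acting on the top three rows). -/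
def Phi (t : ℝ) (T : M5) : M5 :=
  Matrix.of fun i j => if (i : ℕ) < 3 ∧ (j : ℕ) = 4 then T i j + t * T i 3 else T i j

/-- The linear map `F : (ω,v,x) ↦ (ω, v, x + Δt·v)`. -/
def Fmap (Δt : ℝ) (ξ : V9) : V9 := (ξ.1, ξ.2.1, ξ.2.2 + Δt • ξ.2.1)

lemma blk_mul (A A' : M3) (v x v' x' : V3) (d e d' e' : ℝ) :
    blk A v x d e * blk A' v' x' d' e' =
      blk (A * A') (A *ᵥ v' + d' • v) (A *ᵥ x' + e' • x) (d * d') (e * e') := by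
  ext i j
  fin_cases i <;> fin_cases j <;>
    simp [blk, Matrix.mul_apply, Matrix.mulVec, dotProduct,
      Fin.sum_univ_five, Fin.sum_univ_three, Matrix.vecHead, Matrix.vecTail,
      Function.comp] <;> ring

lemma blk_one : blk 1 0 0 1 1 = (1 : M5) := by
  ext i j
  fin_cases i <;> fin_cases j <;>
    simp [blk, Matrix.one_apply, Matrix.vecHead, Matrix.vecTail]

lemma Phi_blk (t : ℝ) (A : M3) (v x : V3) (d e : ℝ) :
    Phi t (blk A v x d e) = blk A v (x + t • v) d e := by
  ext i j
  fin_cases i <;> fin_cases j <;>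
    norm_num [Phi, blk, mul_comm, Matrix.vecHead, Matrix.vecTail] <;> exact Or.inl rfl

lemma Rof_blk (A : M3) (v x : V3) (d e : ℝ) : Rof (blk A v x d e) = A := by
  ext i j
  fin_cases i <;> fin_cases j <;> simp [Rof, blk, Fin.castLE]

lemma Vof_blk (A : M3) (v x : V3) (d e : ℝ) : Vof (blk A v x d e) = v := by
  ext i
  fin_cases i <;> simp [Vof, blk, Fin.castLE]

lemma Xof_blk (A : M3) (v x : V3) (d e : ℝ) : Xof (blk A v x d e) = x := by
  ext i
  fin_cases i <;> simp [Xof, blk, Fin.castLE]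

lemma skew_neg (a : V3) : skew (-a) = -skew a := by
  ext i j
  fin_cases i <;> fin_cases j <;> simp [skew]

lemma skew_anticomm (a b : V3) : skew a *ᵥ b = -(skew b *ᵥ a) := by
  ext i
  fin_cases i <;>
    simp [skew, Matrix.mulVec, dotProduct, Fin.sum_univ_three] <;> ring

lemma adj_skew (M : M3) (a : V3) :
    skew (M *ᵥ a) * M = (Matrix.adjugate M)ᵀ * skew a := by
  rw [Matrix.eta_fin_three M, Matrix.adjugate_fin_three]
  ext i j
  fin_cases i <;> fin_cases j <;>
    simp [skew, Matrix.mul_apply, Matrix.mulVec, dotProduct,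
      Fin.sum_univ_three, Matrix.vecHead, Matrix.vecTail] <;> ring

lemma skew_conj (R : M3) (hR : Rᵀ * R = 1) (hdet : R.det = 1) (a : V3) :
    skew (R *ᵥ a) = R * skew a * Rᵀ := by
  have hR' : R * Rᵀ = 1 := mul_eq_one_comm.mp hR
  have hadj : Matrix.adjugate R = Rᵀ := by
    have h1 : R⁻¹ = Rᵀ := Matrix.inv_eq_left_inv hR
    have h2 : R⁻¹ = Matrix.adjugate R := by
      rw [Matrix.inv_def, hdet]; simp
    rw [← h2, h1]
  have := adj_skew R a
  rw [hadj, Matrix.transpose_transpose] at this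
  calc skew (R *ᵥ a) = skew (R *ᵥ a) * (R * Rᵀ) := by rw [hR', mul_one]
    _ = (skew (R *ᵥ a) * R) * Rᵀ := by rw [mul_assoc]
    _ = R * skew a * Rᵀ := by rw [this]

def Pmat : M5 := blk 0 0 0 1 1

lemma blk_zero : blk 0 0 0 0 0 = (0 : M5) := by
  ext i j
  fin_cases i <;> fin_cases j <;> simp [blk, Matrix.vecHead, Matrix.vecTail]

lemma Pmat_mul_exp (A : M5) (h : Pmat * A = 0) :
    Pmat * NormedSpace.exp A = Pmat := by
  have hpow : ∀ n : ℕ, n ≠ 0 → Pmat * A ^ n = 0 := by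
    intro n hn
    induction n with
    | zero => omega
    | succ m ih =>
      rcases Nat.eq_zero_or_pos m with h0 | hm
      · subst h0; simpa using h
      · rw [pow_succ, ← mul_assoc, ih hm.ne', zero_mul]
  letI : SeminormedRing M5 := Matrix.linftyOpSemiNormedRing
  letI : NormedRing M5 := Matrix.linftyOpNormedRing
  letI : NormedAlgebra ℝ M5 := Matrix.linftyOpNormedAlgebra
  have hs : Summable (fun n : ℕ => (n.factorial : ℝ)⁻¹ • A ^ n) :=
    NormedSpace.expSeries_summable' A
  rw [NormedSpace.exp_eq_tsum ℝ, ← hs.tsum_mul_left Pmat,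
    tsum_eq_single 0 (by
      intro n hn
      rw [mul_smul_comm, hpow n hn, smul_zero])]
  simp

lemma Pmat_mul_hat9 (ξ : V9) : Pmat * hat9 ξ = 0 := by
  rw [Pmat, hat9, hat, blk_mul]
  simp [blk_zero]

lemma Pmat_mul_se23 (R : M3) (V X : V3) : Pmat * se23 R V X = Pmat := by
  rw [Pmat, se23, blk_mul]
  simp

lemma se23_of_P (M : M5) (hP : Pmat * M = Pmat) :
    M = se23 (Rof M) (Vof M) (Xof M) := by
  have key : ∀ j, M 3 j = Pmat 3 j ∧ M 4 j = Pmat 4 j := by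
    intro j
    constructor
    · have := congrFun (congrFun hP 3) j
      simpa [Matrix.mul_apply, Fin.sum_univ_five, Pmat, blk,
        Matrix.vecHead, Matrix.vecTail] using this
    · have := congrFun (congrFun hP 4) j
      simpa [Matrix.mul_apply, Fin.sum_univ_five, Pmat, blk,
        Matrix.vecHead, Matrix.vecTail] using this
  ext i j
  fin_cases i <;> fin_cases j <;>
    simp [se23, blk, Rof, Vof, Xof, Fin.castLE] <;>
    first
      | rfl
      | (simpa [Pmat, blk, Matrix.vecHead, Matrix.vecTail] using (key _).1)
      | (simpa [Pmat, blk, Matrix.vecHead, Matrix.vecTail] using (key _).2)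
      | exact (key _).1.trans rfl
      | exact (key _).2.trans rfl

def DD (t : ℝ) : M5 :=
  !![1,0,0,0,0; 0,1,0,0,0; 0,0,1,0,0; 0,0,0,1,t; 0,0,0,0,1]

lemma DD_mul_DD (s t : ℝ) : DD s * DD t = DD (s + t) := by
  ext i j
  fin_cases i <;> fin_cases j <;>
    simp [DD, Matrix.mul_apply, Fin.sum_univ_five, Matrix.vecHead, Matrix.vecTail,
      add_comm]

lemma DD_zero : DD 0 = (1 : M5) := by
  ext i j
  fin_cases i <;> fin_cases j <;>
    simp [DD, Matrix.one_apply, Matrix.vecHead, Matrix.vecTail]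

set_option maxHeartbeats 2000000 in
lemma DD_conj_hat9 (t : ℝ) (ξ : V9) :
    DD (-t) * hat9 ξ * DD t = hat9 (Fmap t ξ) := by
  ext i j
  fin_cases i <;> fin_cases j <;>
    simp [DD, hat9, hat, Fmap, blk, skew, Matrix.mul_apply, Fin.sum_univ_five,
      Matrix.vecHead, Matrix.vecTail] <;> ring

set_option maxHeartbeats 2000000 in
lemma DD_conj_se23 (t : ℝ) (R : M3) (V X : V3) :
    DD (-t) * se23 R V X * DD t = se23 R V (X + t • V) := by
  ext i j
  fin_cases i <;> fin_cases j <;>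
    simp [DD, se23, blk, Matrix.mul_apply, Fin.sum_univ_five,
      Matrix.vecHead, Matrix.vecTail] <;> ring

lemma se23_mul (R R' : M3) (V X V' X' : V3) :
    se23 R V X * se23 R' V' X' = se23 (R * R') (R *ᵥ V' + V) (R *ᵥ X' + X) := by
  rw [se23, se23, se23, blk_mul, one_mul, one_smul, one_smul]

lemma Rof_se23 (A : M3) (v x : V3) : Rof (se23 A v x) = A := Rof_blk A v x 1 1
lemma Vof_se23 (A : M3) (v x : V3) : Vof (se23 A v x) = v := Vof_blk A v x 1 1
lemma Xof_se23 (A : M3) (v x : V3) : Xof (se23 A v x) = x := Xof_blk A v x 1 1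

lemma Phi_se23 (t : ℝ) (R : M3) (V X : V3) :
    Phi t (se23 R V X) = se23 R V (X + t • V) := Phi_blk t R V X 1 1

lemma se23_mul_inv (Ru : M3) (Vu Xu : V3) (h1 : Ruᵀ * Ru = 1) :
    se23 Ru Vu Xu * se23 Ruᵀ (-(Ruᵀ *ᵥ Vu)) (-(Ruᵀ *ᵥ Xu)) = 1 := by
  have h1' : Ru * Ruᵀ = 1 := mul_eq_one_comm.mp h1
  rw [se23_mul, h1']
  rw [Matrix.mulVec_neg, Matrix.mulVec_neg, Matrix.mulVec_mulVec, Matrix.mulVec_mulVec,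
    h1', Matrix.one_mulVec, Matrix.one_mulVec, neg_add_cancel, neg_add_cancel]
  exact blk_one

lemma se23_inv_mul (Ru : M3) (Vu Xu : V3) (h1 : Ruᵀ * Ru = 1) :
    se23 Ruᵀ (-(Ruᵀ *ᵥ Vu)) (-(Ruᵀ *ᵥ Xu)) * se23 Ru Vu Xu = 1 := by
  rw [se23_mul, h1]
  rw [add_neg_cancel, add_neg_cancel]
  exact blk_one

lemma se23_inv (Ru : M3) (Vu Xu : V3) (h1 : Ruᵀ * Ru = 1) :
    (se23 Ru Vu Xu)⁻¹ = se23 Ruᵀ (-(Ruᵀ *ᵥ Vu)) (-(Ruᵀ *ᵥ Xu)) :=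
  Matrix.inv_eq_right_inv (se23_mul_inv Ru Vu Xu h1)

lemma hat9_Ad (Ru : M3) (Vu Xu : V3) (h1 : Ruᵀ * Ru = 1) (h2 : Ru.det = 1) (ζ : V9) :
    hat9 (Ad (se23 Ruᵀ (-(Ruᵀ *ᵥ Vu)) (-(Ruᵀ *ᵥ Xu))) ζ)
      = se23 Ruᵀ (-(Ruᵀ *ᵥ Vu)) (-(Ruᵀ *ᵥ Xu)) * hat9 ζ * se23 Ru Vu Xu := by
  obtain ⟨ω, v, x⟩ := ζ
  have h1' : Ru * Ruᵀ = 1 := mul_eq_one_comm.mp h1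
  have hsc : ∀ a : V3, skew (Ruᵀ *ᵥ a) = Ruᵀ * skew a * Ru := by
    intro a
    have := skew_conj Ruᵀ (by rw [Matrix.transpose_transpose]; exact h1')
      (by rw [Matrix.det_transpose]; exact h2) a
    rwa [Matrix.transpose_transpose] at this
  have key : ∀ a : V3, (skew (-(Ruᵀ *ᵥ a)) * Ruᵀ) *ᵥ ω = (Ruᵀ * skew ω) *ᵥ a := by
    intro a
    rw [skew_neg, hsc a, neg_mul, mul_assoc (Ruᵀ * skew a) Ru Ruᵀ, h1', mul_one,
      Matrix.neg_mulVec, ← Matrix.mulVec_mulVec, skew_anticomm a ω,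
      Matrix.mulVec_neg, neg_neg, Matrix.mulVec_mulVec]
  simp only [Ad, Rof_se23, Vof_se23, Xof_se23]
  simp only [hat9, hat, se23]
  rw [blk_mul, blk_mul]
  simp only [zero_smul, one_smul, add_zero, mul_zero, zero_mul, mul_one, one_mul]
  rw [hsc ω, key Vu, key Xu]

/-- extended pose error propagation:
`Γ Φ(Tbar exp_m(ξ^∧)) Υ = (Γ Φ(Tbar) Υ) exp_m((Ad_{Υ⁻¹} F ξ)^∧)`. -/
theorem stmt_13 (Δt : ℝ) (Tbar Υ : M5) (hT : IsSE23 Tbar) (hΥ : IsSE23 Υ)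
    (Γ : M5) (hΓ : IsUnit Γ) (ξ : V9) :
    Γ * Phi Δt (Tbar * NormedSpace.exp (hat9 ξ)) * Υ
      = (Γ * Phi Δt Tbar * Υ) * NormedSpace.exp (hat9 (Ad Υ⁻¹ (Fmap Δt ξ))) := by
  obtain ⟨R, V, X, ⟨hR1, hR2⟩, rfl⟩ := hT
  obtain ⟨Ru, Vu, Xu, ⟨hU1, hU2⟩, rfl⟩ := hΥ
  -- units
  let Uu : M5ˣ := ⟨se23 Ru Vu Xu, se23 Ruᵀ (-(Ruᵀ *ᵥ Vu)) (-(Ruᵀ *ᵥ Xu)),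
    se23_mul_inv Ru Vu Xu hU1, se23_inv_mul Ru Vu Xu hU1⟩
  let Du : M5ˣ := ⟨DD Δt, DD (-Δt),
    by rw [DD_mul_DD, add_neg_cancel, DD_zero],
    by rw [DD_mul_DD, neg_add_cancel, DD_zero]⟩
  -- structure of the exponential
  obtain ⟨R1, V1, X1, hEstruct⟩ : ∃ A v w, NormedSpace.exp (hat9 ξ) = se23 A v w :=
    ⟨_, _, _, se23_of_P _ (Pmat_mul_exp _ (Pmat_mul_hat9 ξ))⟩
  -- exponential of the propagated error
  have hEF : NormedSpace.exp (hat9 (Fmap Δt ξ)) = se23 R1 V1 (X1 + Δt • V1) := by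
    have hconj : hat9 (Fmap Δt ξ) = ↑Du⁻¹ * hat9 ξ * ↑Du := (DD_conj_hat9 Δt ξ).symm
    rw [hconj, Matrix.exp_units_conj' Du, hEstruct]
    exact DD_conj_se23 Δt R1 V1 X1
  -- adjoint conjugation
  have hexp2 : NormedSpace.exp
        (se23 Ruᵀ (-(Ruᵀ *ᵥ Vu)) (-(Ruᵀ *ᵥ Xu)) * hat9 (Fmap Δt ξ) * se23 Ru Vu Xu)
      = se23 Ruᵀ (-(Ruᵀ *ᵥ Vu)) (-(Ruᵀ *ᵥ Xu)) * NormedSpace.exp (hat9 (Fmap Δt ξ))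
          * se23 Ru Vu Xu :=
    Matrix.exp_units_conj' Uu _
  have hUU : ∀ Z : M5, se23 Ru Vu Xu * (se23 Ruᵀ (-(Ruᵀ *ᵥ Vu)) (-(Ruᵀ *ᵥ Xu)) * Z) = Z := by
    intro Z
    rw [← mul_assoc, se23_mul_inv Ru Vu Xu hU1, one_mul]
  have hx : (R *ᵥ X1 + X) + Δt • (R *ᵥ V1 + V) = R *ᵥ (X1 + Δt • V1) + (X + Δt • V) := by
    rw [Matrix.mulVec_add, Matrix.mulVec_smul, smul_add]
    module
  rw [se23_inv Ru Vu Xu hU1, hat9_Ad Ru Vu Xu hU1 hU2, hexp2, hEF, hEstruct,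
    Phi_se23, se23_mul R R1 V X V1 X1, Phi_se23, hx,
    ← se23_mul R R1 V (X + Δt • V) V1 (X1 + Δt • V1)]
  simp only [mul_assoc]
  rw [hUU]
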